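/- Let α be the real root of λ³ - λ² - λ - 1 = 0. Then (α+1)/α³ + 1/α³ < 1; consequently every complex root of Q(λ) = λ² + ((α+1)/α³)·λ + 1/α³ has modulus strictly less than 1. -/

import Mathlib

theorem stmt17 (α : ℝ) (hα : α ^ 3 - α ^ 2 - α - 1 = 0) :
    (α + 1) / α ^ 3 + 1 / α ^ 3 < 1 ∧
    ∀ z : ℂ, z ^ 2 + (((α + 1 : ℝ) : ℂ) / (α : ℂ) ^ 3) * z + 1 / (α : ℂ) ^ 3 = 0 →
      ‖z‖ < 1 := by
  have hα1 : 1 < α := by nlinarith [sq_nonneg α, sq_nonneg (α - 1), sq_nonneg (α + 1), sq_nonneg (α^2 - 1)]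
  have hα3 : (0:ℝ) < α ^ 3 := by positivity
  set b : ℝ := (α + 1) / α ^ 3 with hb_def
  set c : ℝ := 1 / α ^ 3 with hc_def
  have hb : 0 < b := by positivity
  have hc : 0 < c := by positivity
  have hsum : b + c < 1 := by
    rw [hb_def, hc_def, ← add_div, div_lt_one hα3]
    nlinarith
  refine ⟨hsum, ?_⟩
  intro z hz
  have hzb : (((α + 1 : ℝ) : ℂ) / (α : ℂ) ^ 3) = (b : ℂ) := by
    rw [hb_def]; push_cast; ring
  have hzc : (1 : ℂ) / (α : ℂ) ^ 3 = (c : ℂ) := by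
    rw [hc_def]; push_cast; ring
  rw [hzb, hzc] at hz
  have hz2 : z ^ 2 = -((b : ℂ) * z + (c : ℂ)) := by linear_combination hz
  by_contra h
  push_neg at h
  have habs : ‖z‖ ^ 2 ≤ b * ‖z‖ + c := by
    calc ‖z‖ ^ 2 = ‖z ^ 2‖ := by rw [norm_pow]
    _ = ‖(b : ℂ) * z + (c : ℂ)‖ := by rw [hz2, norm_neg]
    _ ≤ ‖(b : ℂ) * z‖ + ‖(c : ℂ)‖ := by
        exact norm_add_le _ _
    _ = b * ‖z‖ + c := by
        rw [norm_mul, Complex.norm_real, Complex.norm_real, Real.norm_eq_abs, Real.norm_eq_abs,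
          abs_of_pos hb, abs_of_pos hc]
  nlinarith [habs, h, hb, hc, hsum, sq_nonneg (‖z‖ - 1)]
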